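/- arXiv:1501.04330 — 4 statements merged into one kernel-verified Lean document; each statement's English description precedes it below -/
import Mathlib

section
/- Let M_i be the block-tridiagonal matrices defined recursively by M₁ = E₁ and M_i = fromBlocks M_{i-1} N̄_i Q̄_i E_i, where E_i = [[-k_{i1},1],[-k_{i2},0]], N̄_i has the 2×2 block N = [[0,0],[0,1]] in its bottom position and zeros elsewhere, and Q̄_i has the block Q_i = [[0,k_{i1}],[0,k_{i2}]] in its rightmost position and zeros elsewhere. Then for i ≥ 3, the characteristic polynomial satisfies the recursion P_{M_i}(λ) = λ(λ + k_{i1})·P_{M_{i-1}}(λ) + k_{i2}·(P_{M_{i-1}}(λ) − λ(λ + k_{(i-1)1})·P_{M_{i-2}}(λ)). -/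
open Polynomial Matrix

/-- The block-tridiagonal matrices of the paper: `Mrec k i` is the matrix `M_{i+1}`
(of size `2(i+1) = 2*i+2`) built from the coefficient pairs `k 0, …, k i`,
where `k j = (k_{(j+1)1}, k_{(j+1)2})`. -/
def Mrec (k : ℕ → ℝ × ℝ) : (i : ℕ) → Matrix (Fin (2 * i + 2)) (Fin (2 * i + 2)) ℝ
  | 0 => !![-(k 0).1, 1; -(k 0).2, 0]
  | (i + 1) =>
    Matrix.reindex finSumFinEquiv finSumFinEquiv
      (Matrix.fromBlocks (Mrec k i)
        (Matrix.of fun (p : Fin (2 * i + 2)) (q : Fin 2) =>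
          if (p : ℕ) = 2 * i + 1 ∧ (q : ℕ) = 1 then (1 : ℝ) else 0)
        (Matrix.of fun (p : Fin 2) (q : Fin (2 * i + 2)) =>
          if (q : ℕ) = 2 * i + 1 then
            (if (p : ℕ) = 0 then (k (i + 1)).1 else (k (i + 1)).2) else 0)
        !![-(k (i + 1)).1, 1; -(k (i + 1)).2, 0])


-- rank-one row update determinant
lemma det_sub_ifLast {R : Type*} [CommRing R] {n : ℕ} (P : Matrix (Fin (n+1)) (Fin (n+1)) R)
    (c : R) :
    (P - Matrix.of (fun p q => if p = Fin.last n ∧ q = Fin.last n then c else 0)).det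
      = P.det - c * (P.submatrix Fin.castSucc Fin.castSucc).det := by
  have h : (P - Matrix.of (fun p q => if p = Fin.last n ∧ q = Fin.last n then c else 0))
      = P.updateRow (Fin.last n) (P (Fin.last n) + (-1 : R) • (Pi.single (Fin.last n) c : Fin (n+1) → R)) := by
    ext p q
    by_cases hp : p = Fin.last n
    · subst hp
      simp [Pi.single_apply, sub_eq_add_neg, and_comm]
    · simp [Matrix.updateRow_ne hp, hp]
  rw [h, Matrix.det_updateRow_add, Matrix.det_updateRow_smul, Matrix.updateRow_eq_self]
  have hsingle : (Pi.single (Fin.last n) c : Fin (n+1) → R)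
      = c • (Pi.single (Fin.last n) (1 : R) : Fin (n+1) → R) := by
    ext q; simp [Pi.single_apply]
  rw [hsingle, Matrix.det_updateRow_smul]
  have hadj : (P.updateRow (Fin.last n) (Pi.single (Fin.last n) (1 : R) : Fin (n+1) → R)).det
      = P.adjugate (Fin.last n) (Fin.last n) := (Matrix.adjugate_apply P _ _).symm
  rw [hadj, Matrix.adjugate_fin_succ_eq_det_submatrix, Fin.succAbove_last]
  have : ((-1 : R) ^ ((Fin.last n : ℕ) + (Fin.last n : ℕ))) = 1 :=
    Even.neg_one_pow (Even.add_self _)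
  rw [this]
  ring

lemma minor_charmatrix (k : ℕ → ℝ × ℝ) (j : ℕ) :
    ((charmatrix (Mrec k (j+1))).submatrix
        (Fin.castSucc : Fin (2*(j+1)+1) → Fin (2*(j+1)+2))
        Fin.castSucc).det
      = (X + C (k (j+1)).1) * (Mrec k j).charpoly := by
  have one_le_two' : (1:ℕ) ≤ 2 := one_le_two
  set ι : Fin 1 → Fin 2 := Fin.castLE one_le_two' with hι
  show ((charmatrix (Matrix.reindex finSumFinEquiv finSumFinEquiv
      (Matrix.fromBlocks (Mrec k j)
        (Matrix.of fun (p : Fin (2 * j + 2)) (q : Fin 2) =>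
          if (p : ℕ) = 2 * j + 1 ∧ (q : ℕ) = 1 then (1 : ℝ) else 0)
        (Matrix.of fun (p : Fin 2) (q : Fin (2 * j + 2)) =>
          if (q : ℕ) = 2 * j + 1 then
            (if (p : ℕ) = 0 then (k (j + 1)).1 else (k (j + 1)).2) else 0)
        !![-(k (j + 1)).1, 1; -(k (j + 1)).2, 0]))).submatrix
        (Fin.castSucc : Fin (2*j+2+1) → Fin (2*j+2+2)) Fin.castSucc).det
      = (X + C (k (j+1)).1) * (Mrec k j).charpoly
  rw [charmatrix_reindex, Matrix.reindex_apply, Matrix.submatrix_submatrix]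
  have hfun : (⇑(finSumFinEquiv (m := 2*j+2) (n := 2)).symm ∘
        (Fin.castSucc : Fin (2*j+2+1) → Fin (2*j+2+2)))
      = (Sum.map id ι : Fin (2*j+2) ⊕ Fin 1 → Fin (2*j+2) ⊕ Fin 2) ∘
        ⇑(finSumFinEquiv (m := 2*j+2) (n := 1)).symm := by
    have key : ∀ a : Fin (2*j+2) ⊕ Fin 1,
        (finSumFinEquiv (m := 2*j+2) (n := 2)).symm (Fin.castSucc (finSumFinEquiv (m := 2*j+2) (n := 1) a))
          = Sum.map id ι a := by
      intro a
      apply (Equiv.symm_apply_eq _).mpr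
      rcases a with a | b
      · simp only [Sum.map_inl, id_eq, finSumFinEquiv_apply_left]
        ext; simp
      · simp only [Sum.map_inr, finSumFinEquiv_apply_right]
        ext
        simp [hι, Fin.castLE]
    funext i
    have : i = finSumFinEquiv (finSumFinEquiv.symm i) := (Equiv.apply_symm_apply _ _).symm
    rw [Function.comp_apply, Function.comp_apply, this, Equiv.symm_apply_apply, key]
  rw [hfun, ← Matrix.submatrix_submatrix,
    Matrix.det_submatrix_equiv_self (finSumFinEquiv (m := 2*j+2) (n := 1)).symm]
  rw [charmatrix_fromBlocks]
  have hblocks : ((Matrix.fromBlocks (charmatrix (Mrec k j))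
        (-(Matrix.of fun (p : Fin (2 * j + 2)) (q : Fin 2) =>
          if (p : ℕ) = 2 * j + 1 ∧ (q : ℕ) = 1 then (1 : ℝ) else 0).map C)
        (-(Matrix.of fun (p : Fin 2) (q : Fin (2 * j + 2)) =>
          if (q : ℕ) = 2 * j + 1 then
            (if (p : ℕ) = 0 then (k (j + 1)).1 else (k (j + 1)).2) else 0).map C)
        (charmatrix !![-(k (j + 1)).1, 1; -(k (j + 1)).2, 0])).submatrix
        (Sum.map id ι) (Sum.map id ι))
      = Matrix.fromBlocks (charmatrix (Mrec k j)) 0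
        ((-(Matrix.of fun (p : Fin 2) (q : Fin (2 * j + 2)) =>
          if (q : ℕ) = 2 * j + 1 then
            (if (p : ℕ) = 0 then (k (j + 1)).1 else (k (j + 1)).2) else 0).map C).submatrix
            ι id)
        ((charmatrix !![-(k (j + 1)).1, 1; -(k (j + 1)).2, 0]).submatrix ι ι) := by
    ext (p | p) (q | q) <;>
      simp [hι, Matrix.fromBlocks, Fin.castLE]
  rw [hblocks, Matrix.det_fromBlocks_zero₁₂]
  have h1 : ((charmatrix !![-(k (j + 1)).1, 1; -(k (j + 1)).2, 0]).submatrix ι ι).det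
      = X + C (k (j+1)).1 := by
    rw [Matrix.det_fin_one]
    simp [hι, charmatrix_apply, Fin.castLE]
  rw [h1, Matrix.charpoly, mul_comm]

theorem charpoly_Mrec_recursion (k : ℕ → ℝ × ℝ) (j : ℕ) :
    Matrix.charpoly (Mrec k (j + 2)) =
      X * (X + C (k (j + 2)).1) * Matrix.charpoly (Mrec k (j + 1)) +
        C (k (j + 2)).2 *
          (Matrix.charpoly (Mrec k (j + 1)) -
            X * (X + C (k (j + 1)).1) * Matrix.charpoly (Mrec k j)) := by
  classical
  set a := (k (j+2)).1 with ha
  set b := (k (j+2)).2 with hb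
  set Bmat : Matrix (Fin (2*(j+1)+2)) (Fin 2) ℝ :=
    Matrix.of fun (p : Fin (2 * (j+1) + 2)) (q : Fin 2) =>
      if (p : ℕ) = 2 * (j+1) + 1 ∧ (q : ℕ) = 1 then (1 : ℝ) else 0 with hBmat
  set Cmat : Matrix (Fin 2) (Fin (2*(j+1)+2)) ℝ :=
    Matrix.of fun (p : Fin 2) (q : Fin (2 * (j+1) + 2)) =>
      if (q : ℕ) = 2 * (j+1) + 1 then (if (p : ℕ) = 0 then a else b) else 0 with hCmat
  set Emat : Matrix (Fin 2) (Fin 2) ℝ := !![-a, 1; -b, 0] with hEmat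
  have h0 : (Mrec k (j+2)).charpoly
      = (Matrix.fromBlocks (Mrec k (j+1)) Bmat Cmat Emat).charpoly := by
    show (Matrix.reindex finSumFinEquiv finSumFinEquiv
        (Matrix.fromBlocks (Mrec k (j+1)) Bmat Cmat Emat)).charpoly = _
    exact Matrix.charpoly_reindex _ _
  rw [h0, Matrix.charpoly, charmatrix_fromBlocks]
  -- shorthands
  set P := charmatrix (Mrec k (j+1)) with hP
  set B' := -(Bmat.map (C : ℝ →+* Polynomial ℝ)) with hB'
  set C' := -(Cmat.map (C : ℝ →+* Polynomial ℝ)) with hC'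
  set D := charmatrix Emat with hD
  have hdetD : D.det = X*X + C a * X + C b := by
    rw [hD, hEmat, Matrix.det_fin_two]
    simp [charmatrix_apply]
    ring
  have hdetD_ne : D.det ≠ 0 := by
    rw [hdetD]
    intro h
    have h2 : (X*X + C a * X + C b : Polynomial ℝ).coeff 2 = 1 := by
      simp [coeff_add, ← sq, coeff_X_pow, coeff_C]
    rw [h] at h2
    simp at h2
  have hadjD : adjugate D = !![X, 1; -Polynomial.C b, X + Polynomial.C a] := by
    rw [hD, hEmat, Matrix.adjugate_fin_two]
    ext i j'
    fin_cases i <;> fin_cases j' <;> simp [charmatrix_apply]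
  -- pass to the fraction field
  set K := FractionRing (Polynomial ℝ)
  set φ : Polynomial ℝ →+* K := algebraMap (Polynomial ℝ) K with hφdef
  have hφ : Function.Injective φ := IsFractionRing.injective _ _
  have map_det' : ∀ {m : Type} [inst : Fintype m] [inst2 : DecidableEq m]
      (M : Matrix m m (Polynomial ℝ)), (M.map ⇑φ).det = φ M.det := by
    intro m i1 i2 M
    rw [RingHom.map_det, RingHom.mapMatrix_apply]
  apply hφ
  rw [← map_det', Matrix.fromBlocks_map]
  have hu_ne : φ D.det ≠ 0 := fun h => hdetD_ne (by apply hφ; rw [h, map_zero])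
  haveI : Invertible (D.map φ) := by
    apply Matrix.invertibleOfIsUnitDet
    rw [map_det']
    exact isUnit_iff_ne_zero.mpr hu_ne
  rw [Matrix.det_fromBlocks₂₂]
  -- compute the Schur correction
  have hinv : ⅟(D.map ⇑φ) = (φ D.det)⁻¹ • ((adjugate D).map φ) := by
    rw [Matrix.invOf_eq_nonsing_inv, Matrix.inv_def, map_det', Ring.inverse_eq_inv]
    have hmad := φ.map_adjugate D
    rw [RingHom.mapMatrix_apply, RingHom.mapMatrix_apply] at hmad
    rw [← hmad]
  have hBC : B' * adjugate D * C'
      = Matrix.of (fun p q : Fin (2*(j+1)+2) =>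
          if (p : ℕ) = 2*(j+1)+1 ∧ (q : ℕ) = 2*(j+1)+1 then Polynomial.C b * X else 0) := by
    refine Matrix.ext fun p q => ?_
    simp only [Matrix.mul_apply, Fin.sum_univ_two, hadjD, hB', hC', hBmat, hCmat,
      Matrix.neg_apply, Matrix.map_apply, Matrix.of_apply, Matrix.cons_val',
      Matrix.cons_val_zero, Matrix.cons_val_one, Matrix.head_cons, Matrix.head_fin_const,
      Matrix.empty_val', Matrix.cons_val_fin_one]
    by_cases hp : (p : ℕ) = 2*(j+1)+1 <;> by_cases hq : (q : ℕ) = 2*(j+1)+1 <;>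
      simp [hp, hq] <;> ring
  have hBDC : (B'.map φ) * ⅟(D.map ⇑φ) * (C'.map φ)
      = Matrix.of (fun p q : Fin (2*(j+1)+2) =>
          if p = Fin.last (2*(j+1)+1) ∧ q = Fin.last (2*(j+1)+1) then
            φ (Polynomial.C b * X) * (φ D.det)⁻¹ else 0) := by
    rw [hinv, Matrix.mul_smul, Matrix.smul_mul, ← Matrix.map_mul, ← Matrix.map_mul, hBC]
    ext p q
    have hplast : (p = Fin.last (2*(j+1)+1)) ↔ ((p : ℕ) = 2*(j+1)+1) := by
      rw [Fin.ext_iff, Fin.val_last]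
    have hqlast : (q = Fin.last (2*(j+1)+1)) ↔ ((q : ℕ) = 2*(j+1)+1) := by
      rw [Fin.ext_iff, Fin.val_last]
    simp only [Matrix.smul_apply, Matrix.map_apply, Matrix.of_apply, hplast, hqlast,
      smul_eq_mul]
    split_ifs with h
    · ring
    · simp
  rw [hBDC]
  rw [det_sub_ifLast]
  have hPdet : ((P.map φ)).det = φ ((Mrec k (j+1)).charpoly) := (RingHom.map_det φ P).symm
  have hPsub : ((P.map φ).submatrix Fin.castSucc Fin.castSucc).det
      = φ ((X + Polynomial.C (k (j+1)).1) * (Mrec k j).charpoly) := by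
    have : (P.map φ).submatrix Fin.castSucc Fin.castSucc
        = (P.submatrix (Fin.castSucc : Fin (2*(j+1)+1) → Fin (2*(j+1)+2)) Fin.castSucc).map φ :=
      rfl
    rw [this, map_det', minor_charmatrix k j]
  rw [hPdet, hPsub, map_det', hdetD]
  -- final field algebra
  set u := φ (X*X + C a * X + C b) with hu
  have hu0 : u ≠ 0 := by rw [hu, ← hdetD]; exact hu_ne
  have hexp : u * (φ (Mrec k (j+1)).charpoly -
      φ (Polynomial.C b * X) * u⁻¹ *
        φ ((X + Polynomial.C (k (j+1)).1) * (Mrec k j).charpoly))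
      = u * φ (Mrec k (j+1)).charpoly -
        φ (Polynomial.C b * X) * φ ((X + Polynomial.C (k (j+1)).1) * (Mrec k j).charpoly) := by
    have hui : u * u⁻¹ = 1 := mul_inv_cancel₀ (G₀ := K) hu0
    linear_combination (-(φ (Polynomial.C b * X) * φ ((X + Polynomial.C (k (j+1)).1) * (Mrec k j).charpoly))) * hui
  rw [hexp, hu, ← φ.map_mul, ← φ.map_mul, ← φ.map_sub]
  congr 1
  ring
end

section
/- If M is a real square matrix all of whose eigenvalues have negative real part, then there exists a symmetric positive definite matrix P such that PM + MᵀP = −I (existence of a Lyapunov solution). -/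
open Matrix Polynomial

variable {n : Type*} [Fintype n] [DecidableEq n]

lemma charpoly_eval' {K : Type*} [CommRing K] (A : Matrix n n K) (μ : K) :
    A.charpoly.eval μ = (μ • (1 : Matrix n n K) - A).det := by
  rw [Matrix.charpoly, _root_.eval_det, matPolyEquiv_charmatrix]
  norm_num [Matrix.scalar, smul_eq_diagonal_mul, Pi.algebraMap_def, Algebra.algebraMap_self_apply]

lemma mem_spectrum_iff_root {K : Type*} [Field K] (A : Matrix n n K) (μ : K) :
    μ ∈ spectrum K A ↔ A.charpoly.IsRoot μ := by
  rw [spectrum.mem_iff, Matrix.isUnit_iff_isUnit_det, isUnit_iff_ne_zero, not_not,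
    IsRoot, charpoly_eval']
  congr! 2
  ext i j
  simp [Matrix.algebraMap_matrix_apply, Matrix.one_apply, Matrix.smul_apply, mul_ite]

lemma charpoly_transpose {K : Type*} [CommRing K] (A : Matrix n n K) :
    Aᵀ.charpoly = A.charpoly := by
  rw [Matrix.charpoly, Matrix.charpoly, ← Matrix.det_transpose (charmatrix A)]
  congr 1
  ext i j
  simp only [Matrix.transpose_apply, charmatrix_apply]
  rcases eq_or_ne i j with h | h
  · subst h; rfl
  · rw [Matrix.diagonal_apply_ne _ h, Matrix.diagonal_apply_ne _ h.symm]

lemma pow_mul_eq_mul_pow {K : Type*} [CommRing K] {A B X : Matrix n n K}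
    (h : A * X = X * B) (k : ℕ) : A ^ k * X = X * B ^ k := by
  induction k with
  | zero => simp
  | succ k ih =>
    rw [pow_succ, pow_succ, mul_assoc, h, ← mul_assoc, ih, mul_assoc]

lemma aeval_mul_eq_mul_aeval {K : Type*} [CommRing K] {A B X : Matrix n n K}
    (h : A * X = X * B) (p : K[X]) : (aeval A p) * X = X * (aeval B p) := by
  rw [aeval_eq_sum_range, aeval_eq_sum_range, Finset.sum_mul, Finset.mul_sum]
  refine Finset.sum_congr rfl fun i _ => ?_
  rw [smul_mul_assoc, mul_smul_comm, pow_mul_eq_mul_pow h]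

lemma sylvester_unique (hn : 0 < Fintype.card n) {A B X : Matrix n n ℂ}
    (hAB : ∀ μ ν : ℂ, μ ∈ spectrum ℂ A → ν ∈ spectrum ℂ B → μ + ν ≠ 0)
    (h : A * X + X * B = 0) : X = 0 := by
  have h' : A * X = X * (-B) := by
    rw [mul_neg, eq_neg_iff_add_eq_zero]; exact h
  have key := aeval_mul_eq_mul_aeval h' A.charpoly
  rw [Matrix.aeval_self_charpoly, zero_mul] at key
  have hunit : IsUnit (aeval (-B) A.charpoly) := by
    by_contra hc
    have h0 : (0 : ℂ) ∈ spectrum ℂ (aeval (-B) A.charpoly) :=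
      (spectrum.zero_mem_iff ℂ).mpr hc
    rw [spectrum.map_polynomial_aeval_of_degree_pos (-B) A.charpoly
      (by rw [Matrix.charpoly_degree_eq_dim]; exact_mod_cast hn)] at h0
    obtain ⟨k, hk, hk0⟩ := h0
    rw [← spectrum.neg_eq, Set.mem_neg] at hk
    have hkA : (k : ℂ) ∈ spectrum ℂ A := by
      rw [mem_spectrum_iff_root]; exact hk0
    exact hAB k (-k) hkA hk (by ring)
  obtain ⟨u, hu⟩ := hunit
  calc X = X * (aeval (-B) A.charpoly) * ↑u⁻¹ := by
        rw [← hu, Units.mul_inv_cancel_right]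
    _ = 0 := by rw [← key]; simp

section Real
open Complex

variable {m : ℕ}

/-- stability predicate -/
def Stable (A : Matrix (Fin m) (Fin m) ℝ) : Prop :=
  ∀ μ : ℂ, (A.map Complex.ofReal).charpoly.IsRoot μ → μ.re < 0

lemma isRoot_charpoly_iff {K : Type*} [Field K] (A : Matrix n n K) (μ : K) :
    A.charpoly.IsRoot μ ↔ (μ • (1 : Matrix n n K) - A).det = 0 := by
  rw [IsRoot, charpoly_eval']

lemma lyap_injective (hm : 0 < m) {A : Matrix (Fin m) (Fin m) ℝ} (hA : Stable A)
    {P : Matrix (Fin m) (Fin m) ℝ} (hP : P * A + Aᵀ * P = 0) : P = 0 := by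
  set f := Complex.ofRealHom.mapMatrix (m := Fin m)
  have hmap : P.map Complex.ofReal * A.map Complex.ofReal
      + (A.map Complex.ofReal)ᵀ * P.map Complex.ofReal = 0 := by
    have h1 := congrArg f hP
    rw [map_add, _root_.map_mul, _root_.map_mul, map_zero] at h1
    simp [f, RingHom.mapMatrix_apply, Matrix.transpose_map] at h1
    exact h1
  have hzero : P.map Complex.ofReal = 0 := by
    refine sylvester_unique (A := (A.map Complex.ofReal)ᵀ) (B := A.map Complex.ofReal)
      (by simpa using hm) ?_ ?_
    · intro μ ν hμ hν
      rw [mem_spectrum_iff_root, _root_.charpoly_transpose] at hμ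
      rw [mem_spectrum_iff_root] at hν
      have h1 := hA μ hμ
      have h2 := hA ν hν
      intro hc
      have h3 : (μ + ν).re < 0 := by simpa using add_neg h1 h2
      rw [hc] at h3
      simp at h3
    · rw [add_comm]; exact hmap
  ext i j
  have := congrFun (congrFun hzero i) j
  simpa [Matrix.map_apply] using this

/-- the homotopy path of matrices -/
noncomputable def Mt (M : Matrix (Fin m) (Fin m) ℝ) (t : ℝ) : Matrix (Fin m) (Fin m) ℝ :=
  t • M + (1 - t) • (-1)

lemma stable_Mt (hm : 0 < m) {M : Matrix (Fin m) (Fin m) ℝ} (hM : Stable M) {t : ℝ}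
    (ht : t ∈ Set.Icc (0:ℝ) 1) : Stable (Mt M t) := by
  intro μ hroot
  have hmap : (Mt M t).map Complex.ofReal
      = (t : ℂ) • M.map Complex.ofReal + ((1 : ℂ) - (t : ℂ)) • (-1) := by
    ext i j
    simp only [Mt, Matrix.map_apply, Matrix.add_apply, Matrix.smul_apply, Matrix.neg_apply,
      Matrix.one_apply, smul_eq_mul]
    split_ifs <;> push_cast <;> ring
  rw [isRoot_charpoly_iff, hmap] at hroot
  rcases eq_or_lt_of_le ht.1 with h0 | h0
  · -- t = 0
    subst h0
    have hkey : μ • (1 : Matrix (Fin m) (Fin m) ℂ)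
        - (((0:ℝ):ℂ) • M.map Complex.ofReal
          + ((1:ℂ) - ((0:ℝ):ℂ)) • (-1)) = (μ + 1) • 1 := by
      push_cast
      module
    rw [hkey, Matrix.det_smul, Matrix.det_one, mul_one] at hroot
    have h1 : μ + 1 = 0 :=
      pow_eq_zero_iff (M₀ := ℂ) (by simpa using hm.ne') |>.mp hroot
    have hμ : μ = -1 := by linear_combination h1
    rw [hμ]
    norm_num
  · -- 0 < t
    have htne : ((t:ℝ):ℂ) ≠ 0 := by exact_mod_cast h0.ne'
    obtain ⟨ν, hν⟩ : ∃ ν : ℂ, ((t:ℝ):ℂ) * ν = μ + 1 - (t:ℂ) :=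
      ⟨(μ + 1 - (t:ℂ)) / (t:ℂ), by field_simp⟩
    have hkey : μ • (1 : Matrix (Fin m) (Fin m) ℂ)
        - ((t:ℂ) • M.map Complex.ofReal + ((1:ℂ) - (t:ℂ)) • (-1))
        = (t:ℂ) • (ν • (1 : Matrix (Fin m) (Fin m) ℂ) - M.map Complex.ofReal) := by
      match_scalars
      · linear_combination -hν
      · ring
    rw [hkey, Matrix.det_smul] at hroot
    have hdet : (ν • (1 : Matrix (Fin m) (Fin m) ℂ) - M.map Complex.ofReal).det = 0 := by
      have := pow_ne_zero (Fintype.card (Fin m)) htne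
      exact (mul_eq_zero.mp hroot).resolve_left this
    have hre : ν.re < 0 := hM ν ((isRoot_charpoly_iff _ _).mpr hdet)
    have hμ : μ = ((t:ℝ):ℂ) * ν + (t:ℂ) - 1 := by linear_combination -hν
    have : μ.re = t * ν.re + t - 1 := by
      rw [hμ]
      simp [Complex.add_re, Complex.sub_re, Complex.re_ofReal_mul]
    rw [this]
    nlinarith [ht.2, mul_neg_of_pos_of_neg h0 hre]
end Real

section Solve
variable {m : ℕ}

/-- vectorization of matrices -/
noncomputable def vecEq (m : ℕ) : Matrix (Fin m) (Fin m) ℝ ≃ₗ[ℝ] (Fin m × Fin m → ℝ) :=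
  (LinearEquiv.curry ℝ ℝ (Fin m) (Fin m)).symm

lemma vecEq_apply (P : Matrix (Fin m) (Fin m) ℝ) (ij : Fin m × Fin m) :
    vecEq m P ij = P ij.1 ij.2 := rfl

lemma vecEq_symm_apply (x : Fin m × Fin m → ℝ) (i j : Fin m) :
    (vecEq m).symm x i j = x (i, j) := rfl

/-- the Lyapunov operator as a linear map -/
noncomputable def lyapL (A : Matrix (Fin m) (Fin m) ℝ) :
    Matrix (Fin m) (Fin m) ℝ →ₗ[ℝ] Matrix (Fin m) (Fin m) ℝ where
  toFun P := P * A + Aᵀ * P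
  map_add' P Q := by noncomm_ring
  map_smul' c P := by
    simp [Matrix.smul_mul, Matrix.mul_smul, smul_add]

lemma lyapL_apply (A P : Matrix (Fin m) (Fin m) ℝ) : lyapL A P = P * A + Aᵀ * P := rfl

/-- matrix representation of the Lyapunov operator -/
noncomputable def Kmat (A : Matrix (Fin m) (Fin m) ℝ) :
    Matrix (Fin m × Fin m) (Fin m × Fin m) ℝ :=
  LinearMap.toMatrix' ((vecEq m).toLinearMap ∘ₗ lyapL A ∘ₗ (vecEq m).symm.toLinearMap)

lemma Kmat_mulVec (A P : Matrix (Fin m) (Fin m) ℝ) :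
    Kmat A *ᵥ (vecEq m P) = vecEq m (lyapL A P) := by
  rw [Kmat, ← Matrix.toLin'_apply, Matrix.toLin'_toMatrix']
  simp

lemma isUnit_Kmat {A : Matrix (Fin m) (Fin m) ℝ}
    (h : Function.Injective (lyapL A)) : IsUnit (Kmat A).det := by
  set f := (vecEq m).toLinearMap ∘ₗ lyapL A ∘ₗ (vecEq m).symm.toLinearMap with hf
  have hinj : Function.Injective f := by
    simp only [hf, LinearMap.coe_comp, LinearEquiv.coe_coe, Function.comp]
    exact (vecEq m).injective.comp (h.comp (vecEq m).symm.injective)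
  have hbij : Function.Bijective f :=
    ⟨hinj, LinearMap.injective_iff_surjective.mp hinj⟩
  set e := LinearEquiv.ofBijective f hbij with he
  have hcomp : f ∘ₗ (e.symm : (Fin m × Fin m → ℝ) →ₗ[ℝ] _) = LinearMap.id := by
    ext x
    simp [he] 
  apply Matrix.isUnit_det_of_right_inverse (B := LinearMap.toMatrix' (e.symm : _ →ₗ[ℝ] _))
  rw [Kmat, ← LinearMap.toMatrix'_comp, hcomp, LinearMap.toMatrix'_id]

/-- the solution of the Lyapunov equation -/
noncomputable def Psol (A : Matrix (Fin m) (Fin m) ℝ) : Matrix (Fin m) (Fin m) ℝ :=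
  (vecEq m).symm ((Kmat A)⁻¹ *ᵥ vecEq m (-1))

lemma lyapL_Psol {A : Matrix (Fin m) (Fin m) ℝ} (h : IsUnit (Kmat A).det) :
    lyapL A (Psol A) = -1 := by
  apply (vecEq m).injective
  rw [← Kmat_mulVec, Psol, LinearEquiv.apply_symm_apply, Matrix.mulVec_mulVec,
    Matrix.mul_nonsing_inv _ h, Matrix.one_mulVec]

end Solve

section Cont
variable {m : ℕ}

lemma lyapL_Mt (M : Matrix (Fin m) (Fin m) ℝ) (t : ℝ) :
    lyapL (Mt M t) = t • lyapL M + (1 - t) • lyapL (-1) := by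
  ext P : 1
  simp only [lyapL_apply, LinearMap.add_apply, LinearMap.smul_apply, Mt,
    Matrix.transpose_add, Matrix.transpose_smul, Matrix.transpose_neg, Matrix.transpose_one]
  rw [Matrix.mul_add, Matrix.add_mul]
  simp only [Matrix.mul_smul, Matrix.smul_mul]
  module

lemma Kmat_Mt (M : Matrix (Fin m) (Fin m) ℝ) (t : ℝ) :
    Kmat (Mt M t) = t • Kmat M + (1 - t) • Kmat (-1) := by
  rw [Kmat, Kmat, Kmat, lyapL_Mt]
  rw [LinearMap.add_comp, LinearMap.smul_comp, LinearMap.smul_comp, LinearMap.comp_add,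
    LinearMap.comp_smul, LinearMap.comp_smul, map_add, _root_.map_smul, _root_.map_smul]

lemma continuous_Kmat_Mt (M : Matrix (Fin m) (Fin m) ℝ) :
    Continuous fun t : ℝ => Kmat (Mt M t) := by
  simp only [Kmat_Mt]
  fun_prop

lemma continuousOn_Psol_Mt {M : Matrix (Fin m) (Fin m) ℝ}
    (h : ∀ t ∈ Set.Icc (0:ℝ) 1, IsUnit (Kmat (Mt M t)).det) :
    ContinuousOn (fun t => Psol (Mt M t)) (Set.Icc (0:ℝ) 1) := by
  have hinv : ∀ t ∈ Set.Icc (0:ℝ) 1, ContinuousAt (fun t => (Kmat (Mt M t))⁻¹) t := by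
    intro t ht
    have hd : (Kmat (Mt M t)).det ≠ 0 := by
      intro hc; exact (by simpa [hc] using (h t ht) : IsUnit (0:ℝ)).ne_zero rfl
    refine ContinuousAt.comp ?_ (continuous_Kmat_Mt M).continuousAt
    refine continuousAt_matrix_inv _ ?_
    rw [Ring.inverse_eq_inv']
    exact continuousAt_inv₀ hd
  have hc2 : Continuous fun x : Fin m × Fin m → ℝ => (vecEq m).symm x :=
    continuous_matrix fun i j => by
      simpa [vecEq_symm_apply] using continuous_apply ((i, j) : Fin m × Fin m)
  have hg : Continuous fun A : Matrix (Fin m × Fin m) (Fin m × Fin m) ℝ =>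
      (vecEq m).symm (A *ᵥ vecEq m (-1)) :=
    hc2.comp (continuous_id.matrix_mulVec continuous_const)
  intro t ht
  exact (hg.continuousAt.comp (hinv t ht)).continuousWithinAt

end Cont

section Pos
open Topology Metric
variable {m : ℕ}

lemma continuous_quad (x : Fin m → ℝ) :
    Continuous fun A : Matrix (Fin m) (Fin m) ℝ => x ⬝ᵥ A *ᵥ x :=
  continuous_const.dotProduct (continuous_id.matrix_mulVec continuous_const)

lemma isClosed_possemi :
    IsClosed {A : Matrix (Fin m) (Fin m) ℝ | ∀ x, 0 ≤ x ⬝ᵥ A *ᵥ x} := by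
  have h : {A : Matrix (Fin m) (Fin m) ℝ | ∀ x, 0 ≤ x ⬝ᵥ A *ᵥ x}
      = ⋂ x : Fin m → ℝ, {A | 0 ≤ x ⬝ᵥ A *ᵥ x} := by ext A; simp
  rw [h]
  exact isClosed_iInter fun x => isClosed_le continuous_const (continuous_quad x)

lemma smul_quad (A : Matrix (Fin m) (Fin m) ℝ) (a : ℝ) (x : Fin m → ℝ) :
    (a • x) ⬝ᵥ A *ᵥ (a • x) = a ^ 2 * (x ⬝ᵥ A *ᵥ x) := by
  rw [Matrix.mulVec_smul, smul_dotProduct, dotProduct_smul]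
  simp [smul_eq_mul]; ring

lemma quad_lower {A : Matrix (Fin m) (Fin m) ℝ} {c : ℝ}
    (hmin : ∀ u ∈ Metric.sphere (0 : Fin m → ℝ) 1, c ≤ u ⬝ᵥ A *ᵥ u)
    (x : Fin m → ℝ) (hx : x ≠ 0) : c * ‖x‖ ^ 2 ≤ x ⬝ᵥ A *ᵥ x := by
  have hn : ‖x‖ ≠ 0 := norm_ne_zero_iff.mpr hx
  set u := ‖x‖⁻¹ • x with hu
  have hus : u ∈ Metric.sphere (0 : Fin m → ℝ) 1 := by
    simp [hu, norm_smul, abs_of_nonneg, inv_mul_cancel₀ hn]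
  have hq := hmin u hus
  have hxu : x = ‖x‖ • u := by rw [hu, smul_smul, mul_inv_cancel₀ hn, one_smul]
  have hxq : x ⬝ᵥ A *ᵥ x = ‖x‖ ^ 2 * (u ⬝ᵥ A *ᵥ u) := by
    conv_lhs => rw [hxu]
    exact smul_quad A ‖x‖ u
  calc c * ‖x‖ ^ 2 ≤ (u ⬝ᵥ A *ᵥ u) * ‖x‖ ^ 2 :=
        mul_le_mul_of_nonneg_right hq (sq_nonneg _)
    _ = x ⬝ᵥ A *ᵥ x := by rw [hxq]; ring

lemma quad_perturb (D : Matrix (Fin m) (Fin m) ℝ) (x : Fin m → ℝ) (ε : ℝ)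
    (hD : ∀ i j, |D i j| ≤ ε) :
    |x ⬝ᵥ D *ᵥ x| ≤ (m : ℝ) ^ 2 * ε * ‖x‖ ^ 2 := by
  have hxb : ∀ i, |x i| ≤ ‖x‖ := fun i => by
    simpa [Real.norm_eq_abs] using norm_le_pi_norm x i
  have key : ∀ i, |x i * ∑ j, D i j * x j| ≤ ∑ _j : Fin m, ‖x‖ * (ε * ‖x‖) := by
    intro i
    rw [abs_mul]
    calc |x i| * |∑ j, D i j * x j| ≤ ‖x‖ * ∑ j, ε * ‖x‖ := by
          refine mul_le_mul (hxb i) ?_ (abs_nonneg _) (norm_nonneg _)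
          refine (Finset.abs_sum_le_sum_abs _ _).trans (Finset.sum_le_sum fun j _ => ?_)
          rw [abs_mul]
          exact mul_le_mul (hD i j) (hxb j) (abs_nonneg _)
            (le_trans (abs_nonneg _) (hD i j))
      _ = ∑ _j : Fin m, ‖x‖ * (ε * ‖x‖) := by rw [Finset.mul_sum]
  have hexp : x ⬝ᵥ D *ᵥ x = ∑ i, x i * ∑ j, D i j * x j := by
    simp [dotProduct, Matrix.mulVec]
  calc |x ⬝ᵥ D *ᵥ x| ≤ ∑ i, |x i * ∑ j, D i j * x j| := by
        rw [hexp]; exact Finset.abs_sum_le_sum_abs _ _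
    _ ≤ ∑ _i : Fin m, ∑ _j : Fin m, ‖x‖ * (ε * ‖x‖) := Finset.sum_le_sum fun i _ => key i
    _ = (m : ℝ) ^ 2 * ε * ‖x‖ ^ 2 := by
        simp [Finset.sum_const]
        try ring

lemma isOpen_posq :
    IsOpen {A : Matrix (Fin m) (Fin m) ℝ | ∀ x : Fin m → ℝ, x ≠ 0 → 0 < x ⬝ᵥ A *ᵥ x} := by
  rw [isOpen_iff_mem_nhds]
  intro A hA
  rcases (Metric.sphere (0 : Fin m → ℝ) 1).eq_empty_or_nonempty with hs | hs
  · have hall : ∀ x : Fin m → ℝ, x = 0 := by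
      intro x
      by_contra hx
      have hn : ‖x‖ ≠ 0 := norm_ne_zero_iff.mpr hx
      have hmem : ‖x‖⁻¹ • x ∈ Metric.sphere (0 : Fin m → ℝ) 1 := by
        simp [norm_smul, abs_of_nonneg, inv_mul_cancel₀ hn]
      rw [hs] at hmem
      exact Set.notMem_empty _ hmem
    filter_upwards with B
    intro x hx
    exact absurd (hall x) hx
  · have hcont : Continuous fun u : Fin m → ℝ => u ⬝ᵥ A *ᵥ u :=
      continuous_id.dotProduct (continuous_const.matrix_mulVec continuous_id)
    obtain ⟨x₀, hx₀, hmin⟩ := (isCompact_sphere (0 : Fin m → ℝ) 1).exists_isMinOn hs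
      hcont.continuousOn
    set c := x₀ ⬝ᵥ A *ᵥ x₀ with hc_def
    have hx₀ne : x₀ ≠ 0 := by
      intro h
      rw [h] at hx₀
      simp at hx₀
    have hc : 0 < c := hA x₀ hx₀ne
    set ε := c / ((m : ℝ) ^ 2 + 1) with hε
    have hεpos : 0 < ε := div_pos hc (by positivity)
    have hU : {B : Matrix (Fin m) (Fin m) ℝ | ∀ i j, |B i j - A i j| < ε} ∈ 𝓝 A := by
      have hset : {B : Matrix (Fin m) (Fin m) ℝ | ∀ i j, |B i j - A i j| < ε}
          = ⋂ i, ⋂ j, {B : Matrix (Fin m) (Fin m) ℝ | |B i j - A i j| < ε} := by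
        ext B; simp
      rw [hset]
      refine Filter.iInter_mem.mpr fun i => Filter.iInter_mem.mpr fun j => ?_
      have hcij : Continuous fun B : Matrix (Fin m) (Fin m) ℝ => B i j :=
        (continuous_apply j).comp (continuous_apply i)
      have : IsOpen {B : Matrix (Fin m) (Fin m) ℝ | |B i j - A i j| < ε} := by
        have hop := (isOpen_ball (x := A i j) (ε := ε)).preimage hcij
        convert hop using 1
        ext B; simp [Metric.mem_ball, Real.dist_eq]
      exact this.mem_nhds (by simpa using hεpos)
    filter_upwards [hU] with B hB
    intro x hx
    have h1 : c * ‖x‖ ^ 2 ≤ x ⬝ᵥ A *ᵥ x :=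
      quad_lower (fun u hu => isMinOn_iff.mp hmin u hu) x hx
    have h2 : |x ⬝ᵥ (B - A) *ᵥ x| ≤ (m : ℝ) ^ 2 * ε * ‖x‖ ^ 2 :=
      quad_perturb _ x ε fun i j => (hB i j).le
    have h3 : x ⬝ᵥ B *ᵥ x = x ⬝ᵥ A *ᵥ x + x ⬝ᵥ (B - A) *ᵥ x := by
      rw [Matrix.sub_mulVec, dotProduct_sub]
      ring
    have hxn : 0 < ‖x‖ := norm_pos_iff.mpr hx
    have hlt : (m : ℝ) ^ 2 * ε < c := by
      rw [hε, ← mul_div_assoc, div_lt_iff₀ (by positivity : (0:ℝ) < (m:ℝ) ^ 2 + 1)]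
      nlinarith [sq_nonneg ((m : ℝ))]
    have habs := (abs_le.mp h2).1
    rw [h3]
    nlinarith [mul_pos (sub_pos.mpr hlt) (pow_pos hxn 2)]

end Pos

section Main
open Topology
variable {m : ℕ}

lemma isSymm_isHermitian {P : Matrix (Fin m) (Fin m) ℝ} (h : P.IsSymm) : P.IsHermitian := by
  ext i j
  simpa [Matrix.conjTranspose_apply] using congrFun (congrFun h i) j

lemma solution_mulVec_inj {A P : Matrix (Fin m) (Fin m) ℝ} (hs : P.IsSymm)
    (hsol : P * A + Aᵀ * P = -1) {x : Fin m → ℝ} (hx : P *ᵥ x = 0) : x = 0 := by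
  have h1 : x ⬝ᵥ ((P * A + Aᵀ * P) *ᵥ x) = -(x ⬝ᵥ x) := by
    rw [hsol, Matrix.neg_mulVec, Matrix.one_mulVec, dotProduct_neg]
  have h2 : x ⬝ᵥ ((P * A) *ᵥ x) = 0 := by
    rw [← Matrix.mulVec_mulVec, Matrix.dotProduct_mulVec]
    have hvP : x ᵥ* P = 0 := by
      rw [← hs, Matrix.vecMul_transpose, hx]
    rw [hvP, zero_dotProduct]
  have h3 : x ⬝ᵥ ((Aᵀ * P) *ᵥ x) = 0 := by
    rw [← Matrix.mulVec_mulVec, hx, Matrix.mulVec_zero, dotProduct_zero]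
  rw [Matrix.add_mulVec, dotProduct_add, h2, h3] at h1
  exact dotProduct_self_eq_zero.mp (by linarith)

lemma main_pos (hm : 0 < m) (M : Matrix (Fin m) (Fin m) ℝ) (hM : Stable M) :
    ∃ P : Matrix (Fin m) (Fin m) ℝ, P.IsSymm ∧ P.PosDef ∧ P * M + Mᵀ * P = -1 := by
  have hstab : ∀ t ∈ Set.Icc (0:ℝ) 1, Stable (Mt M t) := fun t ht => stable_Mt hm hM ht
  have hinj : ∀ t ∈ Set.Icc (0:ℝ) 1, Function.Injective (lyapL (Mt M t)) := by
    intro t ht P Q h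
    have h0 : lyapL (Mt M t) (P - Q) = 0 := by rw [map_sub, h, sub_self]
    rw [lyapL_apply] at h0
    exact sub_eq_zero.mp (lyap_injective hm (hstab t ht) h0)
  have hdet : ∀ t ∈ Set.Icc (0:ℝ) 1, IsUnit (Kmat (Mt M t)).det :=
    fun t ht => isUnit_Kmat (hinj t ht)
  have hsol : ∀ t ∈ Set.Icc (0:ℝ) 1,
      Psol (Mt M t) * Mt M t + (Mt M t)ᵀ * Psol (Mt M t) = -1 := by
    intro t ht
    have := lyapL_Psol (hdet t ht)
    rwa [lyapL_apply] at this
  have hsymm : ∀ t (ht : t ∈ Set.Icc (0:ℝ) 1), (Psol (Mt M t)).IsSymm := by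
    intro t ht
    have h1 : lyapL (Mt M t) ((Psol (Mt M t))ᵀ) = -1 := by
      rw [lyapL_apply]
      have h2 := congrArg Matrix.transpose (hsol t ht)
      rw [Matrix.transpose_add, Matrix.transpose_mul, Matrix.transpose_mul,
        Matrix.transpose_transpose, Matrix.transpose_neg, Matrix.transpose_one] at h2
      rw [add_comm]
      exact h2
    have h2 : lyapL (Mt M t) (Psol (Mt M t)) = -1 := by
      rw [lyapL_apply]; exact hsol t ht
    exact hinj t ht (h1.trans h2.symm)
  set T := Set.Icc (0:ℝ) 1 with hT
  haveI : PreconnectedSpace T := Subtype.preconnectedSpace isPreconnected_Icc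
  set g : T → Matrix (Fin m) (Fin m) ℝ := fun τ => Psol (Mt M τ) with hg_def
  have hg : Continuous g := (continuousOn_Psol_Mt hdet).restrict
  set S : Set T := g ⁻¹' {A | ∀ x : Fin m → ℝ, x ≠ 0 → 0 < x ⬝ᵥ A *ᵥ x} with hS_def
  have hSopen : IsOpen S := isOpen_posq.preimage hg
  have hSeq : S = g ⁻¹' {A | ∀ x, 0 ≤ x ⬝ᵥ A *ᵥ x} := by
    ext τ
    simp only [hS_def, Set.mem_preimage, Set.mem_setOf_eq]
    constructor
    · intro h x
      rcases eq_or_ne x 0 with rfl | hx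
      · simp
      · exact (h x hx).le
    · intro h x hx
      have hpsd : (g τ).PosSemidef := by
        refine .of_dotProduct_mulVec_nonneg (isSymm_isHermitian (hsymm τ τ.2)) fun y => ?_
        simpa using h y
      rcases lt_or_eq_of_le (h x) with hlt | heq
      · exact hlt
      · exfalso
        have hPx : (g τ) *ᵥ x = 0 := by
          have hzero := (hpsd.dotProduct_mulVec_zero_iff x)
          rw [star_trivial] at hzero
          exact hzero.mp heq.symm
        exact hx (solution_mulVec_inj (hsymm τ τ.2) (hsol τ τ.2) hPx)
  have hSclosed : IsClosed S := hSeq ▸ isClosed_possemi.preimage hg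
  have h0T : (0:ℝ) ∈ T := by constructor <;> norm_num
  have hP0 : Psol (Mt M 0) = (2⁻¹ : ℝ) • 1 := by
    apply hinj 0 h0T
    have hM0 : Mt M 0 = -1 := by
      simp [Mt]
    rw [lyapL_Psol (hdet 0 h0T), lyapL_apply, hM0]
    ext i j
    simp [Matrix.one_apply, Matrix.smul_apply]
    split_ifs <;> norm_num
  have h0S : (⟨0, h0T⟩ : T) ∈ S := by
    simp only [hS_def, Set.mem_preimage, Set.mem_setOf_eq, hg_def]
    rw [hP0]
    intro x hx
    have hge : (0:ℝ) ≤ x ⬝ᵥ x := Finset.sum_nonneg fun i _ => mul_self_nonneg (x i)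
    have hne : x ⬝ᵥ x ≠ 0 := fun h => hx (dotProduct_self_eq_zero.mp h)
    have hmv : ((2⁻¹ : ℝ) • (1 : Matrix (Fin m) (Fin m) ℝ)) *ᵥ x = (2⁻¹ : ℝ) • x := by
      rw [Matrix.smul_mulVec, Matrix.one_mulVec]
    rw [hmv, dotProduct_smul]
    have : 0 < x ⬝ᵥ x := lt_of_le_of_ne hge (Ne.symm hne)
    simp only [smul_eq_mul]
    linarith
  have hSuniv : S = Set.univ := IsClopen.eq_univ ⟨hSclosed, hSopen⟩ ⟨_, h0S⟩
  have h1T : (1:ℝ) ∈ T := by constructor <;> norm_num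
  have h1S : (⟨1, h1T⟩ : T) ∈ S := hSuniv ▸ Set.mem_univ _
  simp only [hS_def, Set.mem_preimage, Set.mem_setOf_eq, hg_def] at h1S
  have hM1 : Mt M 1 = M := by simp [Mt]
  refine ⟨Psol (Mt M 1), hsymm 1 h1T, ?_, ?_⟩
  · refine .of_dotProduct_mulVec_pos (isSymm_isHermitian (hsymm 1 h1T)) fun x hx => ?_
    rw [star_trivial]
    exact h1S x hx
  · have h := hsol 1 h1T
    nth_rewrite 2 3 [hM1] at h
    exact h

end Main

theorem lyapunov_equation_solvable (m : ℕ)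
    (M : Matrix (Fin m) (Fin m) ℝ)
    (hM : ∀ μ : ℂ, (M.map Complex.ofReal).charpoly.IsRoot μ → μ.re < 0) :
    ∃ P : Matrix (Fin m) (Fin m) ℝ, P.IsSymm ∧ P.PosDef ∧ P * M + Mᵀ * P = -1 := by
  rcases Nat.eq_zero_or_pos m with rfl | hm
  · refine ⟨1, Matrix.isSymm_one, Matrix.PosDef.one, ?_⟩
    ext i j
    exact Fin.elim0 i
  · exact main_pos hm M hM
end

section
/- Let V : ℝ → ℝ be differentiable and nonnegative, and suppose there are constants c > 0 and b ≥ 0 such that for all t ≥ 0, V(t) ≥ b implies V'(t) ≤ −c·V(t). Then for all t ≥ 0, V(t) ≤ max(exp(−c·t)·V(0), b). -/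
theorem lyapunov_comparison (V : ℝ → ℝ) (hV : Differentiable ℝ V)
    (hVnonneg : ∀ t, 0 ≤ V t) (c b : ℝ) (hc : 0 < c) (hb : 0 ≤ b)
    (hdecay : ∀ t, 0 ≤ t → b ≤ V t → deriv V t ≤ -c * V t) :
    ∀ t, 0 ≤ t → V t ≤ max (Real.exp (-c * t) * V 0) b := by
  intro t ht
  have hVc : ∀ s : Set ℝ, ContinuousOn V s := fun s => hV.continuous.continuousOn
  have hVd : ∀ x ∈ Set.Ico (0:ℝ) t ∪ Set.Ico (0:ℝ) t,
      True := fun _ _ => trivial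
  by_cases hcase : ∀ s ∈ Set.Icc (0:ℝ) t, b ≤ V s
  · -- exponential bound
    refine le_max_iff.2 (Or.inl ?_)
    have key : ∀ ε > 0, V t ≤ Real.exp (-c * t) * V 0 + ε := by
      intro ε hε
      have := image_le_of_deriv_right_lt_deriv_boundary
        (f := V) (f' := deriv V) (a := 0) (b := t)
        (hV.continuous.continuousOn)
        (fun x _ => (hV x).hasDerivAt.hasDerivWithinAt)
        (B := fun x => Real.exp (-c * x) * V 0 + ε)
        (B' := fun x => -c * (Real.exp (-c * x) * V 0))
        (by simp [le_of_lt hε])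
        (fun x => by
          have h1 : HasDerivAt (fun x : ℝ => Real.exp (-c * x)) (Real.exp (-c * x) * -c) x := by
            simpa using ((hasDerivAt_id x).const_mul (-c)).exp
          have h2 := (h1.mul_const (V 0)).add_const ε
          refine h2.congr_deriv ?_
          ring)
        ?_ (Set.right_mem_Icc.2 ht)
      · exact this
      · intro x hx hEq
        have hxIcc : x ∈ Set.Icc (0:ℝ) t := ⟨hx.1, le_of_lt hx.2⟩
        have hd := hdecay x hx.1 (hcase x hxIcc)
        have : -c * V x < -c * (Real.exp (-c * x) * V 0) := by
          rw [hEq]; nlinarith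
        linarith
    by_contra h
    push_neg at h
    obtain ⟨ε, hε, hlt⟩ : ∃ ε > 0, Real.exp (-c * t) * V 0 + ε < V t :=
      ⟨(V t - Real.exp (-c * t) * V 0) / 2, by linarith, by linarith⟩
    exact absurd (key ε hε) (not_le.2 hlt)
  · -- V drops below b at some s, then stays ≤ b
    push_neg at hcase
    obtain ⟨s, hs, hVs⟩ := hcase
    refine le_max_iff.2 (Or.inr ?_)
    have key : ∀ ε > 0, V t ≤ b + ε := by
      intro ε hε
      have := image_le_of_deriv_right_lt_deriv_boundary
        (f := V) (f' := deriv V) (a := s) (b := t)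
        (hV.continuous.continuousOn)
        (fun x _ => (hV x).hasDerivAt.hasDerivWithinAt)
        (B := fun _ => b + ε) (B' := fun _ => 0)
        (by linarith)
        (fun x => hasDerivAt_const x (b + ε))
        ?_ (Set.right_mem_Icc.2 hs.2)
      · exact this
      · intro x hx hEq
        have hx0 : (0:ℝ) ≤ x := le_trans hs.1 hx.1
        have hd := hdecay x hx0 (by rw [hEq]; linarith)
        have : -c * V x < 0 := by rw [hEq]; nlinarith
        linarith
    by_contra h
    push_neg at h
    obtain ⟨ε, hε, hlt⟩ : ∃ ε > 0, b + ε < V t :=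
      ⟨(V t - b) / 2, by linarith, by linarith⟩
    exact absurd (key ε hε) (not_le.2 hlt)
end

section
/- Let A ∈ ℝ^{m×m} and suppose there exist a symmetric positive definite P, constants δ > 0 and ℓ* = 4δ‖P‖ such that PA + AᵀP = −I. Then for any ℓ ≥ ℓ* and any perturbation g : ℝ^m → ℝ^m with ‖g(ε)‖ ≤ δ‖ε‖ for all ε, the quadratic form V(ε) = εᵀPε satisfies, along any ε, the bound 2εᵀP(ℓAε + g(ε)) ≤ −(ℓ/2)‖ε‖². -/
open Matrix

theorem lyapunov_derivative_bound (m : ℕ) (A P : Matrix (Fin m) (Fin m) ℝ)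
    (hPsymm : P.IsSymm) (hPpos : P.PosDef)
    (hLyap : P * A + Aᵀ * P = -1) (δ : ℝ) (hδ : 0 < δ) :
    ∀ ℓ : ℝ, 4 * δ * ‖Matrix.toEuclideanCLM (𝕜 := ℝ) P‖ ≤ ℓ →
      ∀ ε w : Fin m → ℝ,
        Real.sqrt (∑ i, w i ^ 2) ≤ δ * Real.sqrt (∑ i, ε i ^ 2) →
          2 * (ε ⬝ᵥ P.mulVec (ℓ • A.mulVec ε + w)) ≤ -(ℓ / 2) * (∑ i, ε i ^ 2) := by
  intro ℓ hℓ ε w hw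
  set T := Matrix.toEuclideanCLM (𝕜 := ℝ) P with hT
  have hTnn : 0 ≤ ‖T‖ := norm_nonneg _
  set S : ℝ := ∑ i, ε i ^ 2 with hS
  have hSnn : 0 ≤ S := Finset.sum_nonneg fun i _ => sq_nonneg _
  have hsq : Real.sqrt S ^ 2 = S := Real.sq_sqrt hSnn
  -- quadratic part
  have hq : ε ⬝ᵥ P.mulVec (A.mulVec ε) = -(1/2) * S := by
    have h1 : ε ⬝ᵥ (Aᵀ * P).mulVec ε = ε ⬝ᵥ (P * A).mulVec ε := by
      rw [Matrix.dotProduct_mulVec, ← Matrix.mulVec_transpose, Matrix.transpose_mul,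
        Matrix.transpose_transpose, hPsymm.eq, dotProduct_comm]
    have h2 : ε ⬝ᵥ ((P * A + Aᵀ * P).mulVec ε) = 2 * (ε ⬝ᵥ (P * A).mulVec ε) := by
      rw [Matrix.add_mulVec, dotProduct_add, h1]; ring
    rw [hLyap] at h2
    have h3 : ε ⬝ᵥ ((-1 : Matrix (Fin m) (Fin m) ℝ).mulVec ε) = -S := by
      rw [Matrix.neg_mulVec, Matrix.one_mulVec, dotProduct_neg]
      simp [hS, dotProduct, sq]
    rw [h3] at h2
    rw [Matrix.mulVec_mulVec] at *
    linarith
  -- perturbation part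
  have hr : ε ⬝ᵥ P.mulVec w ≤ ‖T‖ * Real.sqrt S * Real.sqrt (∑ i, w i ^ 2) := by
    set ε' : EuclideanSpace ℝ (Fin m) := (WithLp.equiv 2 (Fin m → ℝ)).symm ε with hε'
    set w' : EuclideanSpace ℝ (Fin m) := (WithLp.equiv 2 (Fin m → ℝ)).symm w with hw'
    have hne : ε ⬝ᵥ P.mulVec w = inner (𝕜 := ℝ) ε' (T w') := by
      rw [hT, hw', WithLp.equiv_symm_apply, Matrix.toEuclideanCLM_toLp]
      simp [PiLp.inner_apply, dotProduct, hε', WithLp.equiv_symm_apply, mul_comm]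
    have hnε : ‖ε'‖ = Real.sqrt S := by
      rw [EuclideanSpace.norm_eq]
      congr 1
      exact Finset.sum_congr rfl fun i _ => by
        simp [hε', WithLp.equiv_symm_apply, sq_abs]
    have hnw : ‖w'‖ = Real.sqrt (∑ i, w i ^ 2) := by
      rw [EuclideanSpace.norm_eq]
      congr 1
      exact Finset.sum_congr rfl fun i _ => by
        simp [hw', WithLp.equiv_symm_apply, sq_abs]
    calc ε ⬝ᵥ P.mulVec w = inner (𝕜 := ℝ) ε' (T w') := hne
      _ ≤ ‖ε'‖ * ‖T w'‖ := real_inner_le_norm _ _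
      _ ≤ ‖ε'‖ * (‖T‖ * ‖w'‖) := by
          exact mul_le_mul_of_nonneg_left (T.le_opNorm w') (norm_nonneg _)
      _ = ‖T‖ * Real.sqrt S * Real.sqrt (∑ i, w i ^ 2) := by rw [hnε, hnw]; ring
  have hexp : ε ⬝ᵥ P.mulVec (ℓ • A.mulVec ε + w)
      = ℓ * (ε ⬝ᵥ P.mulVec (A.mulVec ε)) + ε ⬝ᵥ P.mulVec w := by
    rw [Matrix.mulVec_add, dotProduct_add, Matrix.mulVec_smul, dotProduct_smul,
      smul_eq_mul]
  rw [hexp, hq]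
  have hwnn : 0 ≤ Real.sqrt (∑ i, w i ^ 2) := Real.sqrt_nonneg _
  have hrw : ε ⬝ᵥ P.mulVec w ≤ ‖T‖ * Real.sqrt S * (δ * Real.sqrt S) := by
    refine hr.trans ?_
    exact mul_le_mul_of_nonneg_left hw (mul_nonneg hTnn (Real.sqrt_nonneg _))
  have key : ‖T‖ * Real.sqrt S * (δ * Real.sqrt S) = δ * ‖T‖ * S := by
    have h := Real.mul_self_sqrt hSnn
    linear_combination δ * ‖T‖ * h
  rw [key] at hrw
  nlinarith [mul_nonneg hδ.le hTnn, mul_nonneg hSnn (mul_nonneg hδ.le hTnn)]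
end
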